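/- Let n ≥ 1 and let π be a permutation of {1, …, n}. Then π is a polynomial interchange if and only if π is separable. Here π is a polynomial interchange if there exist polynomials P₁, …, Pₙ ∈ ℝ[x] and ε > 0 such that for all x ∈ (−ε, 0) one has P₁(x) < P₂(x) < ⋯ < Pₙ(x), and for all x ∈ (0, ε) one has P_{π(1)}(x) < P_{π(2)}(x) < ⋯ < P_{π(n)}(x). -/
import Mathlib

set_option maxHeartbeats 1600000

open Polynomial

lemma mneg (f : Polynomial ℝ) : (-f).rootMultiplicity 0 = f.rootMultiplicity 0 := by
  rcases eq_or_ne f 0 with rfl | hf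
  · simp
  · apply le_antisymm
    · rw [Polynomial.le_rootMultiplicity_iff hf]
      exact (dvd_neg).mp (Polynomial.pow_rootMultiplicity_dvd (-f) 0)
    · rw [Polynomial.le_rootMultiplicity_iff (neg_ne_zero.mpr hf)]
      exact (dvd_neg).mpr (Polynomial.pow_rootMultiplicity_dvd f 0)

lemma ultram (f g h : Polynomial ℝ) (hfg : f - g ≠ 0) :
    min ((f - h).rootMultiplicity 0) ((g - h).rootMultiplicity 0) ≤ (f - g).rootMultiplicity 0 := by
  rw [Polynomial.le_rootMultiplicity_iff hfg]
  have h1 : (Polynomial.X - Polynomial.C 0) ^ min ((f - h).rootMultiplicity 0) ((g - h).rootMultiplicity 0) ∣ (f - h) :=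
    dvd_trans (pow_dvd_pow _ (min_le_left _ _)) (Polynomial.pow_rootMultiplicity_dvd _ 0)
  have h2 : (Polynomial.X - Polynomial.C 0) ^ min ((f - h).rootMultiplicity 0) ((g - h).rootMultiplicity 0) ∣ (g - h) :=
    dvd_trans (pow_dvd_pow _ (min_le_right _ _)) (Polynomial.pow_rootMultiplicity_dvd _ 0)
  have : f - g = (f - h) - (g - h) := by ring
  rw [this]
  exact dvd_sub h1 h2

lemma signParity (f : Polynomial ℝ) (hf : f ≠ 0) :
    ∃ δ : ℝ, 0 < δ ∧ ∀ x : ℝ, 0 < x → x < δ →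
      (f.eval (-x) * f.eval x ≠ 0 ∧ (0 < f.eval (-x) * f.eval x ↔ Even (f.rootMultiplicity 0))) := by
  set m := f.rootMultiplicity 0 with hm
  set g := f /ₘ (Polynomial.X - Polynomial.C 0) ^ m with hgdef
  have hfact : (Polynomial.X - Polynomial.C 0) ^ m * g = f :=
    Polynomial.pow_mul_divByMonic_rootMultiplicity_eq f 0
  have hg0 : g.eval 0 ≠ 0 := Polynomial.eval_divByMonic_pow_rootMultiplicity_ne_zero 0 hf
  obtain ⟨δ, hδ, hδ'⟩ := Metric.continuousAt_iff.mp (g.continuous.continuousAt (x := 0))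
    (|g.eval 0|) (abs_pos.mpr hg0)
  refine ⟨δ, hδ, ?_⟩
  intro x hx hxδ
  have hsame : ∀ y : ℝ, |y| < δ → 0 < g.eval y * g.eval 0 := by
    intro y hy
    have h1 : dist y 0 < δ := by simpa [Real.dist_eq] using hy
    have h2 := hδ' h1
    rw [Real.dist_eq] at h2
    have h3 := abs_lt.mp h2
    rcases abs_cases (g.eval 0) with ⟨he, h0⟩ | ⟨he, h0⟩ <;> nlinarith
  have hev : ∀ y : ℝ, f.eval y = y ^ m * g.eval y := by
    intro y
    conv_lhs => rw [← hfact]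
    simp
  have ht : 0 < g.eval (-x) * g.eval x := by
    have h1 := hsame (-x) (by rw [abs_neg]; rwa [abs_of_pos hx])
    have h2 := hsame x (by rwa [abs_of_pos hx])
    nlinarith [sq_nonneg (g.eval 0)]
  have hkey : f.eval (-x) * f.eval x = (-1 : ℝ) ^ m * (x ^ m * x ^ m * (g.eval (-x) * g.eval x)) := by
    rw [hev (-x), hev x, neg_pow]
    ring
  have hpos : 0 < x ^ m * x ^ m * (g.eval (-x) * g.eval x) :=
    mul_pos (mul_pos (pow_pos hx m) (pow_pos hx m)) ht
  rcases Nat.even_or_odd m with he | ho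
  · rw [hkey, he.neg_one_pow, one_mul]
    exact ⟨ne_of_gt hpos, iff_of_true hpos he⟩
  · rw [hkey, ho.neg_one_pow]
    constructor
    · nlinarith
    · constructor
      · intro hcon; nlinarith
      · intro hcon; exact absurd hcon (Nat.not_even_iff_odd.mpr ho)

lemma mrev (f g : Polynomial ℝ) : (f - g).rootMultiplicity 0 = (g - f).rootMultiplicity 0 := by
  rw [← neg_sub g f, mneg]

lemma core2413 (A B C D : Polynomial ℝ) (ε : ℝ) (hε : 0 < ε)
    (hl : ∀ x : ℝ, -ε < x → x < 0 →
      B.eval x < D.eval x ∧ D.eval x < A.eval x ∧ A.eval x < C.eval x)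
    (hr : ∀ x : ℝ, 0 < x → x < ε →
      A.eval x < B.eval x ∧ B.eval x < C.eval x ∧ C.eval x < D.eval x) :
    False := by
  have hpt := hr (ε/2) (by linarith) (by linarith)
  obtain ⟨hab, hbc, hcd⟩ := hpt
  have nAB : A - B ≠ 0 := fun h => absurd (congrArg (Polynomial.eval (ε/2)) (sub_eq_zero.mp h)) (ne_of_lt hab)
  have nAC : A - C ≠ 0 := fun h => absurd (congrArg (Polynomial.eval (ε/2)) (sub_eq_zero.mp h)) (ne_of_lt (by linarith))
  have nAD : A - D ≠ 0 := fun h => absurd (congrArg (Polynomial.eval (ε/2)) (sub_eq_zero.mp h)) (ne_of_lt (by linarith))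
  have nBC : B - C ≠ 0 := fun h => absurd (congrArg (Polynomial.eval (ε/2)) (sub_eq_zero.mp h)) (ne_of_lt hbc)
  have nBD : B - D ≠ 0 := fun h => absurd (congrArg (Polynomial.eval (ε/2)) (sub_eq_zero.mp h)) (ne_of_lt (by linarith))
  have nCD : C - D ≠ 0 := fun h => absurd (congrArg (Polynomial.eval (ε/2)) (sub_eq_zero.mp h)) (ne_of_lt hcd)
  obtain ⟨δ1, hδ1, H1⟩ := signParity (A-B) nAB
  obtain ⟨δ2, hδ2, H2⟩ := signParity (A-C) nAC
  obtain ⟨δ3, hδ3, H3⟩ := signParity (A-D) nAD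
  obtain ⟨δ4, hδ4, H4⟩ := signParity (B-C) nBC
  obtain ⟨δ5, hδ5, H5⟩ := signParity (B-D) nBD
  obtain ⟨δ6, hδ6, H6⟩ := signParity (C-D) nCD
  set δm := min (min (min δ1 δ2) (min δ3 δ4)) (min (min δ5 δ6) ε) with hδm
  have hδm0 : 0 < δm := by
    simp only [hδm, lt_min_iff]
    exact ⟨⟨⟨hδ1, hδ2⟩, hδ3, hδ4⟩, ⟨hδ5, hδ6⟩, hε⟩
  set x := δm / 2 with hxdef
  have hx : 0 < x := by positivity
  have hxm : x < δm := by simp only [hxdef]; linarith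
  have hc : δm ≤ δ1 ∧ δm ≤ δ2 ∧ δm ≤ δ3 ∧ δm ≤ δ4 ∧ δm ≤ δ5 ∧ δm ≤ δ6 ∧ δm ≤ ε := by
    refine ⟨?_, ?_, ?_, ?_, ?_, ?_, ?_⟩ <;>
      simp only [hδm, min_le_iff, le_refl, true_or, or_true] <;> tauto
  obtain ⟨c1, c2, c3, c4, c5, c6, c7⟩ := hc
  have hL := hl (-x) (by linarith) (by linarith)
  have hR := hr x hx (by linarith)
  obtain ⟨lBD, lDA, lAC⟩ := hL
  obtain ⟨rAB, rBC, rCD⟩ := hR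
  -- parities
  have p1 : (A-B).rootMultiplicity 0 % 2 = 1 := by
    obtain ⟨hne, hiff⟩ := H1 x hx (by linarith)
    rw [← Nat.not_even_iff]
    intro he
    have hprod := hiff.mpr he
    have hneg : (A-B).eval (-x) * (A-B).eval x < 0 := by
      apply mul_neg_of_pos_of_neg
      · simp only [Polynomial.eval_sub]; linarith
      · simp only [Polynomial.eval_sub]; linarith
    linarith
  have p2 : (A-C).rootMultiplicity 0 % 2 = 0 := by
    obtain ⟨hne, hiff⟩ := H2 x hx (by linarith)
    rw [← Nat.even_iff]
    apply hiff.mp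
    apply mul_pos_of_neg_of_neg
    · simp only [Polynomial.eval_sub]; linarith
    · simp only [Polynomial.eval_sub]; linarith
  have p3 : (A-D).rootMultiplicity 0 % 2 = 1 := by
    obtain ⟨hne, hiff⟩ := H3 x hx (by linarith)
    rw [← Nat.not_even_iff]
    intro he
    have hprod := hiff.mpr he
    have hneg : (A-D).eval (-x) * (A-D).eval x < 0 := by
      apply mul_neg_of_pos_of_neg
      · simp only [Polynomial.eval_sub]; linarith
      · simp only [Polynomial.eval_sub]; linarith
    linarith
  have p4 : (B-C).rootMultiplicity 0 % 2 = 0 := by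
    obtain ⟨hne, hiff⟩ := H4 x hx (by linarith)
    rw [← Nat.even_iff]
    apply hiff.mp
    apply mul_pos_of_neg_of_neg
    · simp only [Polynomial.eval_sub]; linarith
    · simp only [Polynomial.eval_sub]; linarith
  have p5 : (B-D).rootMultiplicity 0 % 2 = 0 := by
    obtain ⟨hne, hiff⟩ := H5 x hx (by linarith)
    rw [← Nat.even_iff]
    apply hiff.mp
    apply mul_pos_of_neg_of_neg
    · simp only [Polynomial.eval_sub]; linarith
    · simp only [Polynomial.eval_sub]; linarith
  have p6 : (C-D).rootMultiplicity 0 % 2 = 1 := by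
    obtain ⟨hne, hiff⟩ := H6 x hx (by linarith)
    rw [← Nat.not_even_iff]
    intro he
    have hprod := hiff.mpr he
    have hneg : (C-D).eval (-x) * (C-D).eval x < 0 := by
      apply mul_neg_of_pos_of_neg
      · simp only [Polynomial.eval_sub]; linarith
      · simp only [Polynomial.eval_sub]; linarith
    linarith
  -- ultrametric facts
  have u1a : min ((A-C).rootMultiplicity 0) ((B-C).rootMultiplicity 0) ≤ (A-B).rootMultiplicity 0 := ultram A B C nAB
  have u1b : min ((A-D).rootMultiplicity 0) ((B-D).rootMultiplicity 0) ≤ (A-B).rootMultiplicity 0 := ultram A B D nAB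
  have u2a : min ((A-B).rootMultiplicity 0) ((B-C).rootMultiplicity 0) ≤ (A-C).rootMultiplicity 0 := by
    have := ultram A C B nAC; rwa [mrev C B] at this
  have u2b : min ((A-D).rootMultiplicity 0) ((C-D).rootMultiplicity 0) ≤ (A-C).rootMultiplicity 0 := ultram A C D nAC
  have u3a : min ((A-B).rootMultiplicity 0) ((B-D).rootMultiplicity 0) ≤ (A-D).rootMultiplicity 0 := by
    have := ultram A D B nAD; rwa [mrev D B] at this
  have u3b : min ((A-C).rootMultiplicity 0) ((C-D).rootMultiplicity 0) ≤ (A-D).rootMultiplicity 0 := by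
    have := ultram A D C nAD; rwa [mrev D C] at this
  have u4a : min ((A-B).rootMultiplicity 0) ((A-C).rootMultiplicity 0) ≤ (B-C).rootMultiplicity 0 := by
    have := ultram B C A nBC; rwa [mrev B A, mrev C A] at this
  have u4b : min ((B-D).rootMultiplicity 0) ((C-D).rootMultiplicity 0) ≤ (B-C).rootMultiplicity 0 := ultram B C D nBC
  have u5a : min ((A-B).rootMultiplicity 0) ((A-D).rootMultiplicity 0) ≤ (B-D).rootMultiplicity 0 := by
    have := ultram B D A nBD; rwa [mrev B A, mrev D A] at this
  have u5b : min ((B-C).rootMultiplicity 0) ((C-D).rootMultiplicity 0) ≤ (B-D).rootMultiplicity 0 := by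
    have := ultram B D C nBD; rwa [mrev D C] at this
  have u6a : min ((A-C).rootMultiplicity 0) ((A-D).rootMultiplicity 0) ≤ (C-D).rootMultiplicity 0 := by
    have := ultram C D A nCD; rwa [mrev C A, mrev D A] at this
  have u6b : min ((B-C).rootMultiplicity 0) ((B-D).rootMultiplicity 0) ≤ (C-D).rootMultiplicity 0 := by
    have := ultram C D B nCD; rwa [mrev C B, mrev D B] at this
  omega

lemma core3142 (A B C D : Polynomial ℝ) (ε : ℝ) (hε : 0 < ε)
    (hl : ∀ x : ℝ, -ε < x → x < 0 →
      C.eval x < A.eval x ∧ A.eval x < D.eval x ∧ D.eval x < B.eval x)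
    (hr : ∀ x : ℝ, 0 < x → x < ε →
      A.eval x < B.eval x ∧ B.eval x < C.eval x ∧ C.eval x < D.eval x) :
    False := by
  have hpt := hr (ε/2) (by linarith) (by linarith)
  obtain ⟨hab, hbc, hcd⟩ := hpt
  have nAB : A - B ≠ 0 := fun h => absurd (congrArg (Polynomial.eval (ε/2)) (sub_eq_zero.mp h)) (ne_of_lt hab)
  have nAC : A - C ≠ 0 := fun h => absurd (congrArg (Polynomial.eval (ε/2)) (sub_eq_zero.mp h)) (ne_of_lt (by linarith))
  have nAD : A - D ≠ 0 := fun h => absurd (congrArg (Polynomial.eval (ε/2)) (sub_eq_zero.mp h)) (ne_of_lt (by linarith))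
  have nBC : B - C ≠ 0 := fun h => absurd (congrArg (Polynomial.eval (ε/2)) (sub_eq_zero.mp h)) (ne_of_lt hbc)
  have nBD : B - D ≠ 0 := fun h => absurd (congrArg (Polynomial.eval (ε/2)) (sub_eq_zero.mp h)) (ne_of_lt (by linarith))
  have nCD : C - D ≠ 0 := fun h => absurd (congrArg (Polynomial.eval (ε/2)) (sub_eq_zero.mp h)) (ne_of_lt hcd)
  obtain ⟨δ1, hδ1, H1⟩ := signParity (A-B) nAB
  obtain ⟨δ2, hδ2, H2⟩ := signParity (A-C) nAC
  obtain ⟨δ3, hδ3, H3⟩ := signParity (A-D) nAD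
  obtain ⟨δ4, hδ4, H4⟩ := signParity (B-C) nBC
  obtain ⟨δ5, hδ5, H5⟩ := signParity (B-D) nBD
  obtain ⟨δ6, hδ6, H6⟩ := signParity (C-D) nCD
  set δm := min (min (min δ1 δ2) (min δ3 δ4)) (min (min δ5 δ6) ε) with hδm
  have hδm0 : 0 < δm := by
    simp only [hδm, lt_min_iff]
    exact ⟨⟨⟨hδ1, hδ2⟩, hδ3, hδ4⟩, ⟨hδ5, hδ6⟩, hε⟩
  set x := δm / 2 with hxdef
  have hx : 0 < x := by positivity
  have hxm : x < δm := by simp only [hxdef]; linarith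
  have hc : δm ≤ δ1 ∧ δm ≤ δ2 ∧ δm ≤ δ3 ∧ δm ≤ δ4 ∧ δm ≤ δ5 ∧ δm ≤ δ6 ∧ δm ≤ ε := by
    refine ⟨?_, ?_, ?_, ?_, ?_, ?_, ?_⟩ <;>
      simp only [hδm, min_le_iff, le_refl, true_or, or_true] <;> tauto
  obtain ⟨c1, c2, c3, c4, c5, c6, c7⟩ := hc
  have hL := hl (-x) (by linarith) (by linarith)
  have hR := hr x hx (by linarith)
  obtain ⟨lCA, lAD, lDB⟩ := hL
  obtain ⟨rAB, rBC, rCD⟩ := hR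
  -- parities
  have p1 : (A-B).rootMultiplicity 0 % 2 = 0 := by
    obtain ⟨hne, hiff⟩ := H1 x hx (by linarith)
    rw [← Nat.even_iff]
    apply hiff.mp
    apply mul_pos_of_neg_of_neg
    · simp only [Polynomial.eval_sub]; linarith
    · simp only [Polynomial.eval_sub]; linarith
  have p2 : (A-C).rootMultiplicity 0 % 2 = 1 := by
    obtain ⟨hne, hiff⟩ := H2 x hx (by linarith)
    rw [← Nat.not_even_iff]
    intro he
    have hprod := hiff.mpr he
    have hneg : (A-C).eval (-x) * (A-C).eval x < 0 := by
      apply mul_neg_of_pos_of_neg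
      · simp only [Polynomial.eval_sub]; linarith
      · simp only [Polynomial.eval_sub]; linarith
    linarith
  have p3 : (A-D).rootMultiplicity 0 % 2 = 0 := by
    obtain ⟨hne, hiff⟩ := H3 x hx (by linarith)
    rw [← Nat.even_iff]
    apply hiff.mp
    apply mul_pos_of_neg_of_neg
    · simp only [Polynomial.eval_sub]; linarith
    · simp only [Polynomial.eval_sub]; linarith
  have p4 : (B-C).rootMultiplicity 0 % 2 = 1 := by
    obtain ⟨hne, hiff⟩ := H4 x hx (by linarith)
    rw [← Nat.not_even_iff]
    intro he
    have hprod := hiff.mpr he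
    have hneg : (B-C).eval (-x) * (B-C).eval x < 0 := by
      apply mul_neg_of_pos_of_neg
      · simp only [Polynomial.eval_sub]; linarith
      · simp only [Polynomial.eval_sub]; linarith
    linarith
  have p5 : (B-D).rootMultiplicity 0 % 2 = 1 := by
    obtain ⟨hne, hiff⟩ := H5 x hx (by linarith)
    rw [← Nat.not_even_iff]
    intro he
    have hprod := hiff.mpr he
    have hneg : (B-D).eval (-x) * (B-D).eval x < 0 := by
      apply mul_neg_of_pos_of_neg
      · simp only [Polynomial.eval_sub]; linarith
      · simp only [Polynomial.eval_sub]; linarith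
    linarith
  have p6 : (C-D).rootMultiplicity 0 % 2 = 0 := by
    obtain ⟨hne, hiff⟩ := H6 x hx (by linarith)
    rw [← Nat.even_iff]
    apply hiff.mp
    apply mul_pos_of_neg_of_neg
    · simp only [Polynomial.eval_sub]; linarith
    · simp only [Polynomial.eval_sub]; linarith
  -- ultrametric facts
  have u1a : min ((A-C).rootMultiplicity 0) ((B-C).rootMultiplicity 0) ≤ (A-B).rootMultiplicity 0 := ultram A B C nAB
  have u1b : min ((A-D).rootMultiplicity 0) ((B-D).rootMultiplicity 0) ≤ (A-B).rootMultiplicity 0 := ultram A B D nAB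
  have u2a : min ((A-B).rootMultiplicity 0) ((B-C).rootMultiplicity 0) ≤ (A-C).rootMultiplicity 0 := by
    have := ultram A C B nAC; rwa [mrev C B] at this
  have u2b : min ((A-D).rootMultiplicity 0) ((C-D).rootMultiplicity 0) ≤ (A-C).rootMultiplicity 0 := ultram A C D nAC
  have u3a : min ((A-B).rootMultiplicity 0) ((B-D).rootMultiplicity 0) ≤ (A-D).rootMultiplicity 0 := by
    have := ultram A D B nAD; rwa [mrev D B] at this
  have u3b : min ((A-C).rootMultiplicity 0) ((C-D).rootMultiplicity 0) ≤ (A-D).rootMultiplicity 0 := by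
    have := ultram A D C nAD; rwa [mrev D C] at this
  have u4a : min ((A-B).rootMultiplicity 0) ((A-C).rootMultiplicity 0) ≤ (B-C).rootMultiplicity 0 := by
    have := ultram B C A nBC; rwa [mrev B A, mrev C A] at this
  have u4b : min ((B-D).rootMultiplicity 0) ((C-D).rootMultiplicity 0) ≤ (B-C).rootMultiplicity 0 := ultram B C D nBC
  have u5a : min ((A-B).rootMultiplicity 0) ((A-D).rootMultiplicity 0) ≤ (B-D).rootMultiplicity 0 := by
    have := ultram B D A nBD; rwa [mrev B A, mrev D A] at this
  have u5b : min ((B-C).rootMultiplicity 0) ((C-D).rootMultiplicity 0) ≤ (B-D).rootMultiplicity 0 := by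
    have := ultram B D C nBD; rwa [mrev D C] at this
  have u6a : min ((A-C).rootMultiplicity 0) ((A-D).rootMultiplicity 0) ≤ (C-D).rootMultiplicity 0 := by
    have := ultram C D A nCD; rwa [mrev C A, mrev D A] at this
  have u6b : min ((B-C).rootMultiplicity 0) ((B-D).rootMultiplicity 0) ≤ (C-D).rootMultiplicity 0 := by
    have := ultram C D B nCD; rwa [mrev C B, mrev D B] at this
  omega

def Avoids (n : ℕ) (π : Equiv.Perm (Fin n)) : Prop :=
  ¬ ∃ i₁ i₂ i₃ i₄ : Fin n, i₁ < i₂ ∧ i₂ < i₃ ∧ i₃ < i₄ ∧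
      ((π i₂ < π i₄ ∧ π i₄ < π i₁ ∧ π i₁ < π i₃) ∨
       (π i₃ < π i₁ ∧ π i₁ < π i₄ ∧ π i₄ < π i₂))

lemma decomp : ∀ n : ℕ, 2 ≤ n → ∀ π : Equiv.Perm (Fin n), Avoids n π →
    ∃ k : ℕ, 1 ≤ k ∧ k < n ∧
      ((∀ i : Fin n, (i : ℕ) < k ↔ ((π i : ℕ) < k)) ∨
       (∀ i : Fin n, (i : ℕ) < k ↔ (n - k ≤ (π i : ℕ)))) := by
  intro n
  induction n using Nat.strong_induction_on with
  | _ n ih =>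
  intro hn π hsep
  rcases eq_or_lt_of_le hn with h2 | h3
  · -- n = 2
    refine ⟨1, le_refl 1, by omega, ?_⟩
    have hz : ((⟨0, by omega⟩ : Fin n) : ℕ) = 0 := rfl
    have ho : ((⟨1, by omega⟩ : Fin n) : ℕ) = 1 := rfl
    have hall : ∀ i : Fin n, i = ⟨0, by omega⟩ ∨ i = ⟨1, by omega⟩ := by
      intro i
      have := i.isLt
      rcases Nat.lt_or_ge (i : ℕ) 1 with h | h
      · left; exact Fin.ext (by omega)
      · right; exact Fin.ext (by omega)
    have hvz := (π ⟨0, by omega⟩).isLt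
    have hvo := (π ⟨1, by omega⟩).isLt
    have hne : (π ⟨0, by omega⟩ : ℕ) ≠ (π ⟨1, by omega⟩ : ℕ) := by
      intro h
      have h2' := π.injective (Fin.ext h : π ⟨0, by omega⟩ = π ⟨1, by omega⟩)
      have := congrArg Fin.val h2'
      simp at this
    rcases Nat.lt_or_ge (π ⟨0, by omega⟩ : ℕ) 1 with h0 | h1
    · left
      intro i
      rcases hall i with rfl | rfl <;> omega
    · right
      intro i
      rcases hall i with rfl | rfl <;> omega
  · -- n ≥ 3
    have hn3 : 3 ≤ n := h3
    set last : Fin n := ⟨n-1, by omega⟩ with hlast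
    set c' : ℕ := (π last : ℕ) with hc'
    have hc'n : c' < n := (π _).isLt
    have hπlt' : ∀ i : Fin n, (π i : ℕ) < n := fun i => (π i).isLt
    have hπne : ∀ i : Fin n, (i : ℕ) < n - 1 → (π i : ℕ) ≠ c' := by
      intro i hi h
      have h2' := π.injective (Fin.ext h : π i = π last)
      have := congrArg Fin.val h2'
      rw [hlast] at this
      simp at this
      omega
    have hπinj : ∀ i j : Fin n, (π i : ℕ) = (π j : ℕ) → (i : ℕ) = (j : ℕ) := by
      intro i j h
      exact congrArg Fin.val (π.injective (Fin.ext h))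
    -- the deleted permutation
    have hfvlt : ∀ i : Fin (n-1), (if (π ⟨i.1, by omega⟩ : ℕ) < c' then (π ⟨i.1, by omega⟩ : ℕ)
        else (π ⟨i.1, by omega⟩ : ℕ) - 1) < n - 1 := by
      intro i
      have h1 := hπlt' ⟨i.1, by omega⟩
      have h2 := hπne ⟨i.1, by omega⟩ (by have := i.isLt; exact i.isLt)
      split_ifs <;> omega
    set f : Fin (n-1) → Fin (n-1) :=
      fun i => ⟨if (π ⟨i.1, by omega⟩ : ℕ) < c' then (π ⟨i.1, by omega⟩ : ℕ)
        else (π ⟨i.1, by omega⟩ : ℕ) - 1, hfvlt i⟩ with hf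
    have finj : Function.Injective f := by
      intro i j h
      have h' := congrArg Fin.val h
      simp only [hf] at h'
      have e1 := hπne ⟨i.1, by omega⟩ i.isLt
      have e2 := hπne ⟨j.1, by omega⟩ j.isLt
      have e3 := hπlt' ⟨i.1, by omega⟩
      have e4 := hπlt' ⟨j.1, by omega⟩
      have : (π ⟨i.1, by omega⟩ : ℕ) = (π ⟨j.1, by omega⟩ : ℕ) := by
        split_ifs at h' <;> omega
      have := hπinj _ _ this
      simp at this
      exact Fin.ext this
    set σ : Equiv.Perm (Fin (n-1)) :=
      Equiv.ofBijective f (Finite.injective_iff_bijective.mp finj) with hσ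
    have hσval : ∀ i : Fin (n-1), (σ i : ℕ)
        = if (π ⟨i.1, by omega⟩ : ℕ) < c' then (π ⟨i.1, by omega⟩ : ℕ)
          else (π ⟨i.1, by omega⟩ : ℕ) - 1 := fun i => rfl
    have hsepσ : Avoids (n-1) σ := by
      rintro ⟨j1, j2, j3, j4, h12, h23, h34, hp⟩
      apply hsep
      have hmono : ∀ i j : Fin (n-1), σ i < σ j → π ⟨i.1, by omega⟩ < π ⟨j.1, by omega⟩ := by
        intro i j h
        rw [Fin.lt_def] at h ⊢
        rw [hσval, hσval] at h
        have e1 := hπne ⟨i.1, by omega⟩ i.isLt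
        have e2 := hπne ⟨j.1, by omega⟩ j.isLt
        split_ifs at h <;> omega
      refine ⟨⟨j1.1, by omega⟩, ⟨j2.1, by omega⟩, ⟨j3.1, by omega⟩, ⟨j4.1, by omega⟩,
        by rw [Fin.lt_def]; exact h12, by rw [Fin.lt_def]; exact h23,
        by rw [Fin.lt_def]; exact h34, ?_⟩
      rcases hp with ⟨a, b, c⟩ | ⟨a, b, c⟩
      · exact Or.inl ⟨hmono _ _ a, hmono _ _ b, hmono _ _ c⟩
      · exact Or.inr ⟨hmono _ _ a, hmono _ _ b, hmono _ _ c⟩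
    obtain ⟨k, hk1, hk2, hcase⟩ := ih (n-1) (by omega) (by omega) σ hsepσ
    have hlastval : (π last : ℕ) = c' := rfl
    rcases hcase with hd | hs
    · -- direct case for σ
      have hmaster : ∀ i : Fin n, (i : ℕ) < n - 1 →
          ((i : ℕ) < k ↔ (if (π i : ℕ) < c' then (π i : ℕ) else (π i : ℕ) - 1) < k) := by
        intro i hi
        have h1 := hd ⟨i.1, hi⟩
        rw [hσval] at h1
        have hmk : ((⟨(⟨(i : ℕ), hi⟩ : Fin (n-1)).1, by omega⟩ : Fin n)) = i := Fin.ext rfl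
        rw [hmk] at h1
        have hmk2 : ((⟨(i : ℕ), hi⟩ : Fin (n-1)) : ℕ) = (i : ℕ) := rfl
        rw [hmk2] at h1
        exact h1
      rcases le_or_gt k c' with hck | hck
      · -- c' ≥ k : direct with k
        refine ⟨k, hk1, by omega, Or.inl ?_⟩
        intro i
        rcases Nat.lt_or_ge (i : ℕ) (n-1) with hi | hi
        · have h1 := hmaster i hi
          have h2 := hπne i hi
          split_ifs at h1 <;> omega
        · have hieq : i = last := Fin.ext (by have := i.isLt; have hlv : (last : ℕ) = n - 1 := rfl; omega)
          rw [hieq, hlastval]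
          have : (last : ℕ) = n - 1 := rfl
          omega
      · -- c' < k
        have hblock : ∀ i : Fin n, (i : ℕ) < n - 1 → ((i : ℕ) < k ↔ (π i : ℕ) < k + 1) := by
          intro i hi
          have h1 := hmaster i hi
          have h2 := hπne i hi
          split_ifs at h1 <;> omega
        rcases Nat.eq_zero_or_pos c' with hc0 | hc1
        · -- c' = 0 : skew with n-1
          refine ⟨n-1, by omega, by omega, Or.inr ?_⟩
          intro i
          rcases Nat.lt_or_ge (i : ℕ) (n-1) with hi | hi
          · have h2 := hπne i hi
            omega
          · have hieq : i = last := Fin.ext (by have := i.isLt; have hlv : (last : ℕ) = n - 1 := rfl; omega)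
            rw [hieq, hlastval]
            have : (last : ℕ) = n - 1 := rfl
            omega
        · -- c' ≥ 1
          by_cases hex : ∃ p₁ p₂ : Fin n, p₁ < p₂ ∧ (p₂ : ℕ) < k ∧
              (π p₂ : ℕ) < c' ∧ c' < (π p₁ : ℕ)
          · exfalso
            obtain ⟨p₁, p₂, hp12, hp2k, hv2, hv1⟩ := hex
            apply hsep
            have hπk : k + 1 ≤ (π ⟨k, by omega⟩ : ℕ) := by
              have h1 := hblock ⟨k, by omega⟩ (by simpa using hk2)
              simp only [Fin.val_mk] at h1
              omega
            have hπp1 : (π p₁ : ℕ) < k + 1 := by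
              have hp1k : (p₁ : ℕ) < k := by have := Fin.lt_def.mp hp12; omega
              have h1 := hblock p₁ (by omega)
              omega
            refine ⟨p₁, p₂, ⟨k, by omega⟩, last, hp12, Fin.lt_def.mpr (by simpa using hp2k),
              Fin.lt_def.mpr (by show k < n - 1; omega), Or.inl ⟨?_, ?_, ?_⟩⟩
            · exact Fin.lt_def.mpr (by rw [hlastval]; exact hv2)
            · exact Fin.lt_def.mpr (by rw [hlastval]; exact hv1)
            · exact Fin.lt_def.mpr (by omega)
          · push_neg at hex
            set S : Finset (Fin n) := Finset.univ.filter (fun i => (π i : ℕ) < c') with hS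
            have hmemS : ∀ i : Fin n, i ∈ S ↔ (π i : ℕ) < c' := by
              intro i; simp [hS]
            have hcardS : S.card = c' := by
              have himg : S = Finset.image π.symm
                  (Finset.univ.filter (fun v : Fin n => (v : ℕ) < c')) := by
                ext i
                simp only [hmemS, Finset.mem_image, Finset.mem_filter, Finset.mem_univ, true_and]
                constructor
                · intro h; exact ⟨π i, h, π.symm_apply_apply i⟩
                · rintro ⟨v, hv, rfl⟩; rwa [π.apply_symm_apply]
              rw [himg, Finset.card_image_of_injective _ π.symm.injective]
              have : (Finset.univ.filter (fun v : Fin n => (v : ℕ) < c'))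
                  = Finset.Iio (⟨c', hc'n⟩ : Fin n) := by
                ext v
                simp [Finset.mem_Iio, Fin.lt_def]
              rw [this, Fin.card_Iio]
            have hSk : ∀ i ∈ S, (i : ℕ) < k := by
              intro i hi
              rw [hmemS] at hi
              have hin : (i : ℕ) < n - 1 := by
                by_contra h
                have hieq : i = last := Fin.ext (by have := i.isLt; have hlv : (last : ℕ) = n - 1 := rfl; omega)
                rw [hieq, hlastval] at hi
                omega
              have h1 := hblock i hin
              omega
            have hdc : ∀ p₁ p₂ : Fin n, p₁ ≤ p₂ → p₂ ∈ S → p₁ ∈ S := by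
              intro p₁ p₂ hle hp2
              rcases eq_or_lt_of_le hle with rfl | hlt
              · exact hp2
              · have hp2' := (hmemS p₂).mp hp2
                rw [hmemS]
                have hp2k := hSk p₂ hp2
                have h1 := hex p₁ p₂ hlt hp2k hp2'
                have hp1n : (p₁ : ℕ) < n - 1 := by
                  have := Fin.lt_def.mp hlt; omega
                have h2 := hπne p₁ hp1n
                omega
            refine ⟨c', hc1, by omega, Or.inl ?_⟩
            intro i
            constructor
            · intro hi
              by_contra hni
              have hiS : i ∉ S := by rw [hmemS]; omega
              have hsub : S ⊆ Finset.Iio i := by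
                intro j hj
                rw [Finset.mem_Iio]
                by_contra hji
                push_neg at hji
                exact hiS (hdc i j hji hj)
              have := Finset.card_le_card hsub
              rw [hcardS, Fin.card_Iio] at this
              omega
            · intro hi
              have hiS : i ∈ S := by rw [hmemS]; omega
              have hsub : Finset.Iic i ⊆ S := by
                intro j hj
                rw [Finset.mem_Iic] at hj
                exact hdc j i hj hiS
              have := Finset.card_le_card hsub
              rw [hcardS, Fin.card_Iic] at this
              omega
    · -- skew case for σ
      have hmaster : ∀ i : Fin n, (i : ℕ) < n - 1 →
          ((i : ℕ) < k ↔ (n-1) - k ≤ (if (π i : ℕ) < c' then (π i : ℕ) else (π i : ℕ) - 1)) := by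
        intro i hi
        have h1 := hs ⟨i.1, hi⟩
        rw [hσval] at h1
        have hmk : ((⟨(⟨(i : ℕ), hi⟩ : Fin (n-1)).1, by omega⟩ : Fin n)) = i := Fin.ext rfl
        rw [hmk] at h1
        have hmk2 : ((⟨(i : ℕ), hi⟩ : Fin (n-1)) : ℕ) = (i : ℕ) := rfl
        rw [hmk2] at h1
        exact h1
      rcases Nat.lt_or_ge c' (n - k) with hck | hck
      · -- c' < n - k : skew with k
        refine ⟨k, hk1, by omega, Or.inr ?_⟩
        intro i
        rcases Nat.lt_or_ge (i : ℕ) (n-1) with hi | hi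
        · have h1 := hmaster i hi
          have h2 := hπne i hi
          have h3 := hπlt' i
          split_ifs at h1 <;> omega
        · have hieq : i = last := Fin.ext (by have := i.isLt; have hlv : (last : ℕ) = n - 1 := rfl; omega)
          rw [hieq, hlastval]
          have : (last : ℕ) = n - 1 := rfl
          omega
      · -- c' ≥ n - k
        have hblock : ∀ i : Fin n, (i : ℕ) < n - 1 →
            ((i : ℕ) < k ↔ (n-1) - k ≤ (π i : ℕ)) := by
          intro i hi
          have h1 := hmaster i hi
          have h2 := hπne i hi
          have h3 := hπlt' i
          split_ifs at h1 <;> omega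
        rcases Nat.lt_or_ge c' (n-1) with hcn | hcn
        · -- c' ≤ n - 2
          by_cases hex : ∃ p₁ p₂ : Fin n, p₁ < p₂ ∧ (p₂ : ℕ) < k ∧
              (π p₁ : ℕ) < c' ∧ c' < (π p₂ : ℕ)
          · exfalso
            obtain ⟨p₁, p₂, hp12, hp2k, hv1, hv2⟩ := hex
            apply hsep
            have hπk : (π ⟨k, by omega⟩ : ℕ) < (n-1) - k := by
              have h1 := hblock ⟨k, by omega⟩ (by simpa using hk2)
              simp only [Fin.val_mk] at h1
              omega
            have hπp1 : (n-1) - k ≤ (π p₁ : ℕ) := by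
              have hp1k : (p₁ : ℕ) < k := by have := Fin.lt_def.mp hp12; omega
              have h1 := hblock p₁ (by omega)
              omega
            refine ⟨p₁, p₂, ⟨k, by omega⟩, last, hp12, Fin.lt_def.mpr (by simpa using hp2k),
              Fin.lt_def.mpr (by show k < n - 1; omega), Or.inr ⟨?_, ?_, ?_⟩⟩
            · exact Fin.lt_def.mpr (by omega)
            · exact Fin.lt_def.mpr (by rw [hlastval]; exact hv1)
            · exact Fin.lt_def.mpr (by rw [hlastval]; exact hv2)
          · push_neg at hex
            set S : Finset (Fin n) := Finset.univ.filter (fun i => c' < (π i : ℕ)) with hS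
            have hmemS : ∀ i : Fin n, i ∈ S ↔ c' < (π i : ℕ) := by
              intro i; simp [hS]
            have hcardS : S.card = n - 1 - c' := by
              have himg : S = Finset.image π.symm
                  (Finset.univ.filter (fun v : Fin n => c' < (v : ℕ))) := by
                ext i
                simp only [hmemS, Finset.mem_image, Finset.mem_filter, Finset.mem_univ, true_and]
                constructor
                · intro h; exact ⟨π i, h, π.symm_apply_apply i⟩
                · rintro ⟨v, hv, rfl⟩; rwa [π.apply_symm_apply]
              rw [himg, Finset.card_image_of_injective _ π.symm.injective]
              have : (Finset.univ.filter (fun v : Fin n => c' < (v : ℕ)))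
                  = Finset.Ioi (⟨c', hc'n⟩ : Fin n) := by
                ext v
                simp [Finset.mem_Ioi, Fin.lt_def]
              rw [this, Fin.card_Ioi]
            have hSk : ∀ i ∈ S, (i : ℕ) < k := by
              intro i hi
              rw [hmemS] at hi
              have hin : (i : ℕ) < n - 1 := by
                by_contra h
                have hieq : i = last := Fin.ext (by have := i.isLt; have hlv : (last : ℕ) = n - 1 := rfl; omega)
                rw [hieq, hlastval] at hi
                omega
              have h1 := hblock i hin
              omega
            have hdc : ∀ p₁ p₂ : Fin n, p₁ ≤ p₂ → p₂ ∈ S → p₁ ∈ S := by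
              intro p₁ p₂ hle hp2
              rcases eq_or_lt_of_le hle with rfl | hlt
              · exact hp2
              · have hp2' := (hmemS p₂).mp hp2
                rw [hmemS]
                have hp2k := hSk p₂ hp2
                have h1 := hex p₁ p₂ hlt hp2k
                have hp1n : (p₁ : ℕ) < n - 1 := by
                  have := Fin.lt_def.mp hlt; omega
                have h2 := hπne p₁ hp1n
                omega
            refine ⟨n - 1 - c', by omega, by omega, Or.inr ?_⟩
            intro i
            have hiff : (i ∈ S) ↔ (n - (n - 1 - c') ≤ (π i : ℕ)) := by
              rw [hmemS]; omega
            rw [← hiff]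
            constructor
            · intro hi
              by_contra hni
              have hsub : S ⊆ Finset.Iio i := by
                intro j hj
                rw [Finset.mem_Iio]
                by_contra hji
                push_neg at hji
                exact hni (hdc i j hji hj)
              have := Finset.card_le_card hsub
              rw [hcardS, Fin.card_Iio] at this
              omega
            · intro hi
              have hsub : Finset.Iic i ⊆ S := by
                intro j hj
                rw [Finset.mem_Iic] at hj
                exact hdc j i hj hi
              have := Finset.card_le_card hsub
              rw [hcardS, Fin.card_Iic] at this
              omega
        · -- c' = n - 1 : direct with n-1
          refine ⟨n-1, by omega, by omega, Or.inl ?_⟩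
          intro i
          rcases Nat.lt_or_ge (i : ℕ) (n-1) with hi | hi
          · have h2 := hπne i hi
            have h3 := hπlt' i
            omega
          · have hieq : i = last := Fin.ext (by have := i.isLt; have hlv : (last : ℕ) = n - 1 := rfl; omega)
            rw [hieq, hlastval]
            have : (last : ℕ) = n - 1 := rfl
            omega

lemma polybound (m : ℕ) (Q : Fin m → Polynomial ℝ) :
    ∃ M : ℝ, 1 ≤ M ∧ ∀ (i : Fin m) (x : ℝ), |x| ≤ 1 → |(Q i).eval x| ≤ M := by
  have hb : ∀ i : Fin m, ∃ C : ℝ, ∀ x : ℝ, |x| ≤ 1 → |(Q i).eval x| ≤ C := by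
    intro i
    obtain ⟨C, hC⟩ := (isCompact_Icc (a := (-1 : ℝ)) (b := 1)).exists_bound_of_continuousOn
      ((Q i).continuous.continuousOn)
    exact ⟨C, fun x hx => by
      have := hC x (by rw [Set.mem_Icc]; constructor <;> [linarith [abs_le.mp hx]; linarith [abs_le.mp hx]])
      simpa [Real.norm_eq_abs] using this⟩
  choose C hC using hb
  refine ⟨1 + ∑ i : Fin m, |C i|, by
    have : 0 ≤ ∑ i : Fin m, |C i| := Finset.sum_nonneg (fun _ _ => abs_nonneg _)
    linarith, ?_⟩
  intro i x hx
  have h1 := hC i x hx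
  have h2 : C i ≤ ∑ j : Fin m, |C j| :=
    le_trans (le_abs_self _) (Finset.single_le_sum (f := fun j => |C j|)
      (fun _ _ => abs_nonneg _) (Finset.mem_univ i))
  linarith

lemma build : ∀ n : ℕ, ∀ π : Equiv.Perm (Fin n), Avoids n π →
    ∃ (P : Fin n → Polynomial ℝ) (ε : ℝ), 0 < ε ∧
      (∀ x : ℝ, -ε < x → x < 0 →
        ∀ i j : Fin n, i < j → (P i).eval x < (P j).eval x) ∧
      (∀ x : ℝ, 0 < x → x < ε →
        ∀ i j : Fin n, i < j → (P (π i)).eval x < (P (π j)).eval x) := by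
  intro n
  induction n using Nat.strong_induction_on with
  | _ n ih =>
  intro π hsep
  rcases Nat.lt_or_ge n 2 with hn1 | hn2
  · -- trivial
    refine ⟨fun _ => 0, 1, one_pos, ?_, ?_⟩ <;>
    · intro x _ _ i j hij
      exfalso
      have h1 := Fin.lt_def.mp hij
      have h2 := j.isLt
      omega
  · obtain ⟨k, hk1, hk2, hcase⟩ := decomp n hn2 π hsep
    rcases hcase with hd | hd
    · -- direct sum
      have hval : ∀ i : Fin n, (i : ℕ) < k → (π i : ℕ) < k := fun i hi => (hd i).mp hi
      have hval' : ∀ i : Fin n, k ≤ (i : ℕ) → k ≤ (π i : ℕ) := by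
        intro i hi
        by_contra h
        have := (hd i).mpr (by omega)
        omega
      -- σ on Fin k
      set f1 : Fin k → Fin k := fun i => ⟨(π ⟨i.1, by omega⟩ : ℕ), (hd ⟨i.1, by omega⟩).mp i.isLt⟩ with hf1
      have f1inj : Function.Injective f1 := by
        intro i j h
        have h' := congrArg Fin.val h
        simp only [hf1] at h'
        have h2 := π.injective (Fin.ext h' : π ⟨i.1, by omega⟩ = π ⟨j.1, by omega⟩)
        have h3 := congrArg Fin.val h2
        exact Fin.ext h3
      set σ : Equiv.Perm (Fin k) := Equiv.ofBijective f1 (Finite.injective_iff_bijective.mp f1inj) with hσ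
      have hσval : ∀ i : Fin k, (σ i : ℕ) = (π ⟨i.1, by omega⟩ : ℕ) := fun _ => rfl
      have hσval' : ∀ (m : ℕ) (h : m < k), ((σ ⟨m, h⟩ : Fin k) : ℕ) = (π ⟨m, by omega⟩ : ℕ) :=
        fun _ _ => rfl
      have hsepσ : Avoids k σ := by
        rintro ⟨j1, j2, j3, j4, h12, h23, h34, hp⟩
        apply hsep
        have hmono : ∀ a b : Fin k, σ a < σ b → π ⟨a.1, by omega⟩ < π ⟨b.1, by omega⟩ := by
          intro a b h
          rw [Fin.lt_def] at h ⊢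
          rw [hσval, hσval] at h
          exact h
        refine ⟨⟨j1.1, by omega⟩, ⟨j2.1, by omega⟩, ⟨j3.1, by omega⟩, ⟨j4.1, by omega⟩,
          Fin.lt_def.mpr (Fin.lt_def.mp h12), Fin.lt_def.mpr (Fin.lt_def.mp h23),
          Fin.lt_def.mpr (Fin.lt_def.mp h34), ?_⟩
        rcases hp with ⟨a, b, c⟩ | ⟨a, b, c⟩
        · exact Or.inl ⟨hmono _ _ a, hmono _ _ b, hmono _ _ c⟩
        · exact Or.inr ⟨hmono _ _ a, hmono _ _ b, hmono _ _ c⟩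
      -- τ on Fin (n-k)
      set f2 : Fin (n-k) → Fin (n-k) := fun j => ⟨(π ⟨k + j.1, by omega⟩ : ℕ) - k, by
        have h1 := hval' ⟨k + j.1, by omega⟩ (by simp)
        have h2 := (π ⟨k + j.1, by omega⟩).isLt
        omega⟩ with hf2
      have f2inj : Function.Injective f2 := by
        intro i j h
        have h' := congrArg Fin.val h
        simp only [hf2] at h'
        have e1 := hval' ⟨k + i.1, by omega⟩ (by simp)
        have e2 := hval' ⟨k + j.1, by omega⟩ (by simp)
        have h4 : (π ⟨k + i.1, by omega⟩ : ℕ) = (π ⟨k + j.1, by omega⟩ : ℕ) := by omega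
        have h5 := π.injective (Fin.ext h4)
        have h6 : k + i.1 = k + j.1 := congrArg Fin.val h5
        exact Fin.ext (by omega)
      set τ : Equiv.Perm (Fin (n-k)) := Equiv.ofBijective f2 (Finite.injective_iff_bijective.mp f2inj) with hτ
      have hτval : ∀ j : Fin (n-k), (τ j : ℕ) = (π ⟨k + j.1, by omega⟩ : ℕ) - k := fun _ => rfl
      have hτval' : ∀ (m : ℕ) (h : m < n - k),
          ((τ ⟨m, h⟩ : Fin (n-k)) : ℕ) = (π ⟨k + m, by omega⟩ : ℕ) - k := fun _ _ => rfl
      have hsepτ : Avoids (n-k) τ := by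
        rintro ⟨j1, j2, j3, j4, h12, h23, h34, hp⟩
        apply hsep
        have hmono : ∀ a b : Fin (n-k), τ a < τ b → π ⟨k + a.1, by omega⟩ < π ⟨k + b.1, by omega⟩ := by
          intro a b h
          rw [Fin.lt_def] at h ⊢
          rw [hτval, hτval] at h
          have e1 := hval' ⟨k + a.1, by omega⟩ (by simp)
          have e2 := hval' ⟨k + b.1, by omega⟩ (by simp)
          omega
        refine ⟨⟨k + j1.1, by omega⟩, ⟨k + j2.1, by omega⟩, ⟨k + j3.1, by omega⟩, ⟨k + j4.1, by omega⟩,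
          Fin.lt_def.mpr (by have := Fin.lt_def.mp h12; simp; omega),
          Fin.lt_def.mpr (by have := Fin.lt_def.mp h23; simp; omega),
          Fin.lt_def.mpr (by have := Fin.lt_def.mp h34; simp; omega), ?_⟩
        rcases hp with ⟨a, b, c⟩ | ⟨a, b, c⟩
        · exact Or.inl ⟨hmono _ _ a, hmono _ _ b, hmono _ _ c⟩
        · exact Or.inr ⟨hmono _ _ a, hmono _ _ b, hmono _ _ c⟩
      obtain ⟨P1, ε1, hε1, h1l, h1r⟩ := ih k (by omega) σ hsepσ
      obtain ⟨P2, ε2, hε2, h2l, h2r⟩ := ih (n-k) (by omega) τ hsepτ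
      obtain ⟨M, hM1, hMb⟩ := polybound k P1
      obtain ⟨M', hM1', hMb'⟩ := polybound (n-k) P2
      set N : ℝ := M + M' with hN
      have hNb : ∀ (i : Fin k) (x : ℝ), |x| ≤ 1 → |(P1 i).eval x| ≤ N := by
        intro i x hx; have := hMb i x hx; simp only [hN]; linarith
      have hNb' : ∀ (j : Fin (n-k)) (x : ℝ), |x| ≤ 1 → |(P2 j).eval x| ≤ N := by
        intro j x hx; have := hMb' j x hx; simp only [hN]; linarith
      have hN2 : 2 ≤ N := by simp only [hN]; linarith
      set ε : ℝ := min (min ε1 ε2) (min 1 (1/(2*N+1))) with hε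
      have hεpos : 0 < ε := by
        simp only [hε, lt_min_iff]
        refine ⟨⟨hε1, hε2⟩, one_pos, by positivity⟩
      have hεle : ε ≤ ε1 ∧ ε ≤ ε2 ∧ ε ≤ 1 ∧ ε ≤ 1/(2*N+1) := by
        refine ⟨?_, ?_, ?_, ?_⟩ <;> simp only [hε, min_le_iff, le_refl, true_or, or_true] <;> tauto
      obtain ⟨he1, he2, he3, he4⟩ := hεle
      -- key inequality
      have hkey1 : ∀ x u v : ℝ, -ε < x → x < ε → |u| ≤ N → |v| ≤ N → x^2*u < x^2*v + 1 := by
        intro x u v hx1 hx2 hu hv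
        have hxa : |x| < ε := abs_lt.mpr ⟨hx1, hx2⟩
        have hxa1 : |x| ≤ 1 := by linarith
        have h2M : (0:ℝ) < 2*N+1 := by linarith
        have hx4 : |x| * (2*N+1) < 1 := by
          have := lt_of_lt_of_le hxa he4
          calc |x| * (2*N+1) < (1/(2*N+1)) * (2*N+1) := by
                apply mul_lt_mul_of_pos_right this h2M
            _ = 1 := by field_simp
        have huv : u - v ≤ 2*N := by
          have := abs_le.mp hu; have := abs_le.mp hv; linarith
        have h5 : x^2 * (u - v) ≤ x^2 * (2*N) := mul_le_mul_of_nonneg_left huv (sq_nonneg x)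
        have hsq : x^2 = |x| * |x| := by rw [sq, ← abs_mul_abs_self]
        have h6 : x^2 * (2*N) < 1 := by
          rw [hsq]
          nlinarith [abs_nonneg x]
        nlinarith
      have hbig : ∀ (a : Fin k) (b : Fin (n-k)) (x : ℝ), -ε < x → x < ε → x ≠ 0 →
          x^2 * (P1 a).eval x < x^2 * (P2 b).eval x + 1 := by
        intro a b x hx1 hx2 _
        have hxa1 : |x| ≤ 1 := by
          have := abs_lt.mpr ⟨hx1, hx2⟩; linarith
        exact hkey1 x _ _ hx1 hx2 (hNb a x hxa1) (hNb' b x hxa1)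
      -- the polynomials
      set P : Fin n → Polynomial ℝ := fun v =>
        if h : (v : ℕ) < k then Polynomial.X^2 * P1 ⟨v.1, h⟩
        else Polynomial.X^2 * P2 ⟨v.1 - k, by have := v.isLt; omega⟩ + Polynomial.C 1 with hP
      have hPlow : ∀ (v : Fin n) (h : (v : ℕ) < k) (x : ℝ),
          (P v).eval x = x^2 * (P1 ⟨v.1, h⟩).eval x := by
        intro v h x
        simp only [hP, dif_pos h]
        simp
      have hPhigh : ∀ (v : Fin n) (h : ¬ ((v : ℕ) < k)) (x : ℝ),
          (P v).eval x = x^2 * (P2 ⟨v.1 - k, by have := v.isLt; omega⟩).eval x + 1 := by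
        intro v h x
        simp only [hP, dif_neg h]
        simp
      refine ⟨P, ε, hεpos, ?_, ?_⟩
      · -- left
        intro x hx1 hx2 i j hij
        have hxne : x ≠ 0 := by intro h; rw [h] at hx2; exact absurd hx2 (lt_irrefl 0)
        have hsq : 0 < x^2 := by positivity
        have hij' := Fin.lt_def.mp hij
        by_cases hjk : (j : ℕ) < k
        · have hik : (i : ℕ) < k := by omega
          rw [hPlow i hik x, hPlow j hjk x]
          have := h1l x (by linarith) hx2 ⟨i.1, hik⟩ ⟨j.1, hjk⟩ (Fin.lt_def.mpr hij')
          exact mul_lt_mul_of_pos_left this hsq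
        · by_cases hik : (i : ℕ) < k
          · rw [hPlow i hik x, hPhigh j hjk x]
            exact hbig _ _ x hx1 (by linarith) hxne
          · rw [hPhigh i hik x, hPhigh j hjk x]
            have := h2l x (by linarith) hx2 ⟨i.1 - k, by have := i.isLt; omega⟩
              ⟨j.1 - k, by have := j.isLt; omega⟩ (Fin.lt_def.mpr (show i.1 - k < j.1 - k by omega))
            have := mul_lt_mul_of_pos_left this hsq
            linarith
      · -- right
        intro x hx1 hx2 i j hij
        have hxne : x ≠ 0 := ne_of_gt hx1
        have hsq : 0 < x^2 := by positivity
        have hij' := Fin.lt_def.mp hij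
        by_cases hjk : (j : ℕ) < k
        · have hik : (i : ℕ) < k := by omega
          have hvi : (π i : ℕ) < k := hval i hik
          have hvj : (π j : ℕ) < k := hval j hjk
          rw [hPlow (π i) hvi x, hPlow (π j) hvj x]
          have hidx1 : (⟨(π i).1, hvi⟩ : Fin k) = σ ⟨i.1, hik⟩ := by
            apply Fin.ext
            rw [hσval' i.1 hik]
          have hidx2 : (⟨(π j).1, hvj⟩ : Fin k) = σ ⟨j.1, hjk⟩ := by
            apply Fin.ext
            rw [hσval' j.1 hjk]
          rw [hidx1, hidx2]
          have := h1r x hx1 (by linarith) ⟨i.1, hik⟩ ⟨j.1, hjk⟩ (Fin.lt_def.mpr hij')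
          exact mul_lt_mul_of_pos_left this hsq
        · by_cases hik : (i : ℕ) < k
          · have hvi : (π i : ℕ) < k := hval i hik
            have hvj : ¬ ((π j : ℕ) < k) := by have := hval' j (by omega); omega
            rw [hPlow (π i) hvi x, hPhigh (π j) hvj x]
            exact hbig _ _ x (by linarith) (by linarith) hxne
          · have hvi : ¬ ((π i : ℕ) < k) := by have := hval' i (by omega); omega
            have hvj : ¬ ((π j : ℕ) < k) := by have := hval' j (by omega); omega
            rw [hPhigh (π i) hvi x, hPhigh (π j) hvj x]
            have hidx1 : (⟨(π i).1 - k, by have := (π i).isLt; omega⟩ : Fin (n-k)) = τ ⟨i.1 - k, by have := i.isLt; omega⟩ := by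
              apply Fin.ext
              show (π i).1 - k = (π ⟨k + (i.1 - k), by omega⟩ : ℕ) - k
              have he : (⟨k + (i.1 - k), by omega⟩ : Fin n) = i := Fin.ext (show k + (i.1 - k) = i.1 by omega)
              rw [he]
            have hidx2 : (⟨(π j).1 - k, by have := (π j).isLt; omega⟩ : Fin (n-k)) = τ ⟨j.1 - k, by have := j.isLt; omega⟩ := by
              apply Fin.ext
              show (π j).1 - k = (π ⟨k + (j.1 - k), by omega⟩ : ℕ) - k
              have he : (⟨k + (j.1 - k), by omega⟩ : Fin n) = j := Fin.ext (show k + (j.1 - k) = j.1 by omega)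
              rw [he]
            rw [hidx1, hidx2]
            have := h2r x hx1 (by linarith) ⟨i.1 - k, by have := i.isLt; omega⟩
              ⟨j.1 - k, by have := j.isLt; omega⟩ (Fin.lt_def.mpr (show i.1 - k < j.1 - k by omega))
            have := mul_lt_mul_of_pos_left this hsq
            linarith
    · -- skew sum
      have hval : ∀ i : Fin n, (i : ℕ) < k → n - k ≤ (π i : ℕ) := fun i hi => (hd i).mp hi
      have hval' : ∀ i : Fin n, k ≤ (i : ℕ) → (π i : ℕ) < n - k := by
        intro i hi
        by_contra h
        have := (hd i).mpr (by omega)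
        omega
      -- σ on Fin k (top values)
      set f1 : Fin k → Fin k := fun i => ⟨(π ⟨i.1, by omega⟩ : ℕ) - (n - k), by
        have h1 := hval ⟨i.1, by omega⟩ i.isLt
        have h2 := (π ⟨i.1, by omega⟩).isLt
        omega⟩ with hf1
      have f1inj : Function.Injective f1 := by
        intro i j h
        have h' := congrArg Fin.val h
        simp only [hf1] at h'
        have e1 := hval ⟨i.1, by omega⟩ i.isLt
        have e2 := hval ⟨j.1, by omega⟩ j.isLt
        have h4 : (π ⟨i.1, by omega⟩ : ℕ) = (π ⟨j.1, by omega⟩ : ℕ) := by omega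
        have h5 := π.injective (Fin.ext h4)
        have h6 := congrArg Fin.val h5
        exact Fin.ext h6
      set σ : Equiv.Perm (Fin k) := Equiv.ofBijective f1 (Finite.injective_iff_bijective.mp f1inj) with hσ
      have hσval' : ∀ (m : ℕ) (h : m < k), ((σ ⟨m, h⟩ : Fin k) : ℕ) = (π ⟨m, by omega⟩ : ℕ) - (n - k) :=
        fun _ _ => rfl
      have hsepσ : Avoids k σ := by
        rintro ⟨j1, j2, j3, j4, h12, h23, h34, hp⟩
        apply hsep
        have hmono : ∀ a b : Fin k, σ a < σ b → π ⟨a.1, by omega⟩ < π ⟨b.1, by omega⟩ := by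
          intro a b h
          rw [Fin.lt_def] at h ⊢
          rw [hσval' a.1 a.isLt, hσval' b.1 b.isLt] at h
          have e1 := hval ⟨a.1, by omega⟩ a.isLt
          have e2 := hval ⟨b.1, by omega⟩ b.isLt
          omega
        refine ⟨⟨j1.1, by omega⟩, ⟨j2.1, by omega⟩, ⟨j3.1, by omega⟩, ⟨j4.1, by omega⟩,
          Fin.lt_def.mpr (Fin.lt_def.mp h12), Fin.lt_def.mpr (Fin.lt_def.mp h23),
          Fin.lt_def.mpr (Fin.lt_def.mp h34), ?_⟩
        rcases hp with ⟨a, b, c⟩ | ⟨a, b, c⟩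
        · exact Or.inl ⟨hmono _ _ a, hmono _ _ b, hmono _ _ c⟩
        · exact Or.inr ⟨hmono _ _ a, hmono _ _ b, hmono _ _ c⟩
      -- τ on Fin (n-k) (bottom values)
      set f2 : Fin (n-k) → Fin (n-k) := fun j => ⟨(π ⟨k + j.1, by omega⟩ : ℕ), by
        exact hval' ⟨k + j.1, by omega⟩ (Nat.le_add_right k j.1)⟩ with hf2
      have f2inj : Function.Injective f2 := by
        intro i j h
        have h' := congrArg Fin.val h
        simp only [hf2] at h'
        have h5 := π.injective (Fin.ext h' : π ⟨k + i.1, by omega⟩ = π ⟨k + j.1, by omega⟩)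
        have h6 : k + i.1 = k + j.1 := congrArg Fin.val h5
        exact Fin.ext (by omega)
      set τ : Equiv.Perm (Fin (n-k)) := Equiv.ofBijective f2 (Finite.injective_iff_bijective.mp f2inj) with hτ
      have hτval' : ∀ (m : ℕ) (h : m < n - k),
          ((τ ⟨m, h⟩ : Fin (n-k)) : ℕ) = (π ⟨k + m, by omega⟩ : ℕ) := fun _ _ => rfl
      have hsepτ : Avoids (n-k) τ := by
        rintro ⟨j1, j2, j3, j4, h12, h23, h34, hp⟩
        apply hsep
        have hmono : ∀ a b : Fin (n-k), τ a < τ b → π ⟨k + a.1, by omega⟩ < π ⟨k + b.1, by omega⟩ := by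
          intro a b h
          rw [Fin.lt_def] at h ⊢
          rw [hτval' a.1 a.isLt, hτval' b.1 b.isLt] at h
          exact h
        refine ⟨⟨k + j1.1, by omega⟩, ⟨k + j2.1, by omega⟩, ⟨k + j3.1, by omega⟩, ⟨k + j4.1, by omega⟩,
          Fin.lt_def.mpr (show k + j1.1 < k + j2.1 by have := Fin.lt_def.mp h12; omega),
          Fin.lt_def.mpr (show k + j2.1 < k + j3.1 by have := Fin.lt_def.mp h23; omega),
          Fin.lt_def.mpr (show k + j3.1 < k + j4.1 by have := Fin.lt_def.mp h34; omega), ?_⟩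
        rcases hp with ⟨a, b, c⟩ | ⟨a, b, c⟩
        · exact Or.inl ⟨hmono _ _ a, hmono _ _ b, hmono _ _ c⟩
        · exact Or.inr ⟨hmono _ _ a, hmono _ _ b, hmono _ _ c⟩
      obtain ⟨P1, ε1, hε1, h1l, h1r⟩ := ih k (by omega) σ hsepσ
      obtain ⟨P2, ε2, hε2, h2l, h2r⟩ := ih (n-k) (by omega) τ hsepτ
      obtain ⟨M, hM1, hMb⟩ := polybound k P1
      obtain ⟨M', hM1', hMb'⟩ := polybound (n-k) P2
      set N : ℝ := M + M' with hN
      have hNb : ∀ (i : Fin k) (x : ℝ), |x| ≤ 1 → |(P1 i).eval x| ≤ N := by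
        intro i x hx; have := hMb i x hx; simp only [hN]; linarith
      have hNb' : ∀ (j : Fin (n-k)) (x : ℝ), |x| ≤ 1 → |(P2 j).eval x| ≤ N := by
        intro j x hx; have := hMb' j x hx; simp only [hN]; linarith
      have hN2 : 2 ≤ N := by simp only [hN]; linarith
      set ε : ℝ := min (min ε1 ε2) (min 1 (1/(2*N+1))) with hε
      have hεpos : 0 < ε := by
        simp only [hε, lt_min_iff]
        refine ⟨⟨hε1, hε2⟩, one_pos, by positivity⟩
      have hεle : ε ≤ ε1 ∧ ε ≤ ε2 ∧ ε ≤ 1 ∧ ε ≤ 1/(2*N+1) := by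
        refine ⟨?_, ?_, ?_, ?_⟩ <;> simp only [hε, min_le_iff, le_refl, true_or, or_true] <;> tauto
      obtain ⟨he1, he2, he3, he4⟩ := hεle
      have hkey2 : ∀ x u v : ℝ, -ε < x → x < ε → x ≠ 0 → |u| ≤ N → |v| ≤ N →
          x^2*u < x^2*v + |x| := by
        intro x u v hx1 hx2 hx0 hu hv
        have hxa : |x| < ε := abs_lt.mpr ⟨hx1, hx2⟩
        have hxpos : 0 < |x| := abs_pos.mpr hx0
        have h2M : (0:ℝ) < 2*N+1 := by linarith
        have hx4 : |x| * (2*N+1) < 1 := by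
          have := lt_of_lt_of_le hxa he4
          calc |x| * (2*N+1) < (1/(2*N+1)) * (2*N+1) := by
                apply mul_lt_mul_of_pos_right this h2M
            _ = 1 := by field_simp
        have huv : u - v ≤ 2*N := by
          have := abs_le.mp hu; have := abs_le.mp hv; linarith
        have h5 : x^2 * (u - v) ≤ x^2 * (2*N) := mul_le_mul_of_nonneg_left huv (sq_nonneg x)
        have hsq : x^2 = |x| * |x| := by rw [sq, ← abs_mul_abs_self]
        have h6 : x^2 * (2*N) < |x| := by
          rw [hsq]
          nlinarith
        nlinarith
      set P : Fin n → Polynomial ℝ := fun v =>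
        if h : (v : ℕ) < n - k then Polynomial.X^2 * P2 ⟨v.1, h⟩
        else Polynomial.X^2 * P1 ⟨v.1 - (n - k), by have := v.isLt; omega⟩ - Polynomial.X with hP
      have hPlow : ∀ (v : Fin n) (h : (v : ℕ) < n - k) (x : ℝ),
          (P v).eval x = x^2 * (P2 ⟨v.1, h⟩).eval x := by
        intro v h x
        simp only [hP, dif_pos h]
        simp
      have hPhigh : ∀ (v : Fin n) (h : ¬ ((v : ℕ) < n - k)) (x : ℝ),
          (P v).eval x = x^2 * (P1 ⟨v.1 - (n - k), by have := v.isLt; omega⟩).eval x - x := by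
        intro v h x
        simp only [hP, dif_neg h]
        simp
      refine ⟨P, ε, hεpos, ?_, ?_⟩
      · -- left : x < 0
        intro x hx1 hx2 i j hij
        have hxne : x ≠ 0 := by intro h; rw [h] at hx2; exact absurd hx2 (lt_irrefl 0)
        have hsq : 0 < x^2 := by positivity
        have hxa1 : |x| ≤ 1 := by have := abs_lt.mpr ⟨hx1, by linarith⟩; linarith
        have hij' := Fin.lt_def.mp hij
        by_cases hjk : (j : ℕ) < n - k
        · have hik : (i : ℕ) < n - k := by omega
          rw [hPlow i hik x, hPlow j hjk x]
          have := h2l x (by linarith) hx2 ⟨i.1, hik⟩ ⟨j.1, hjk⟩ (Fin.lt_def.mpr hij')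
          exact mul_lt_mul_of_pos_left this hsq
        · by_cases hik : (i : ℕ) < n - k
          · rw [hPlow i hik x, hPhigh j hjk x]
            have := hkey2 x ((P2 ⟨i.1, hik⟩).eval x)
              ((P1 ⟨j.1 - (n - k), by have := j.isLt; omega⟩).eval x)
              hx1 (by linarith) hxne (hNb' _ x hxa1) (hNb _ x hxa1)
            rw [abs_of_neg hx2] at this
            linarith
          · rw [hPhigh i hik x, hPhigh j hjk x]
            have := h1l x (by linarith) hx2 ⟨i.1 - (n - k), by have := i.isLt; omega⟩
              ⟨j.1 - (n - k), by have := j.isLt; omega⟩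
              (Fin.lt_def.mpr (show i.1 - (n - k) < j.1 - (n - k) by omega))
            have := mul_lt_mul_of_pos_left this hsq
            linarith
      · -- right : x > 0
        intro x hx1 hx2 i j hij
        have hxne : x ≠ 0 := ne_of_gt hx1
        have hsq : 0 < x^2 := by positivity
        have hxa1 : |x| ≤ 1 := by have := abs_lt.mpr ⟨by linarith, hx2⟩; linarith
        have hij' := Fin.lt_def.mp hij
        by_cases hjk : (j : ℕ) < k
        · -- both positions < k : values are high
          have hik : (i : ℕ) < k := by omega
          have hvi : ¬ ((π i : ℕ) < n - k) := by have := hval i hik; omega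
          have hvj : ¬ ((π j : ℕ) < n - k) := by have := hval j hjk; omega
          rw [hPhigh (π i) hvi x, hPhigh (π j) hvj x]
          have hidx1 : (⟨(π i).1 - (n - k), by have := (π i).isLt; omega⟩ : Fin k) = σ ⟨i.1, hik⟩ := by
            apply Fin.ext
            rw [hσval' i.1 hik]
          have hidx2 : (⟨(π j).1 - (n - k), by have := (π j).isLt; omega⟩ : Fin k) = σ ⟨j.1, hjk⟩ := by
            apply Fin.ext
            rw [hσval' j.1 hjk]
          rw [hidx1, hidx2]
          have := h1r x hx1 (by linarith) ⟨i.1, hik⟩ ⟨j.1, hjk⟩ (Fin.lt_def.mpr hij')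
          have := mul_lt_mul_of_pos_left this hsq
          linarith
        · by_cases hik : (i : ℕ) < k
          · -- i high value, j low value
            have hvi : ¬ ((π i : ℕ) < n - k) := by have := hval i hik; omega
            have hvj : (π j : ℕ) < n - k := hval' j (by omega)
            rw [hPhigh (π i) hvi x, hPlow (π j) hvj x]
            have := hkey2 x ((P1 ⟨(π i).1 - (n - k), by have := (π i).isLt; omega⟩).eval x)
              ((P2 ⟨(π j).1, hvj⟩).eval x)
              (by linarith) hx2 hxne (hNb _ x hxa1) (hNb' _ x hxa1)
            rw [abs_of_pos hx1] at this
            linarith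
          · -- both low values
            have hvi : (π i : ℕ) < n - k := hval' i (by omega)
            have hvj : (π j : ℕ) < n - k := hval' j (by omega)
            rw [hPlow (π i) hvi x, hPlow (π j) hvj x]
            have hidx1 : (⟨(π i).1, hvi⟩ : Fin (n-k)) = τ ⟨i.1 - k, by have := i.isLt; omega⟩ := by
              apply Fin.ext
              show (π i).1 = (π ⟨k + (i.1 - k), by omega⟩ : ℕ)
              have he : (⟨k + (i.1 - k), by omega⟩ : Fin n) = i := Fin.ext (show k + (i.1 - k) = i.1 by omega)
              rw [he]
            have hidx2 : (⟨(π j).1, hvj⟩ : Fin (n-k)) = τ ⟨j.1 - k, by have := j.isLt; omega⟩ := by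
              apply Fin.ext
              show (π j).1 = (π ⟨k + (j.1 - k), by omega⟩ : ℕ)
              have he : (⟨k + (j.1 - k), by omega⟩ : Fin n) = j := Fin.ext (show k + (j.1 - k) = j.1 by omega)
              rw [he]
            rw [hidx1, hidx2]
            have := h2r x hx1 (by linarith) ⟨i.1 - k, by have := i.isLt; omega⟩
              ⟨j.1 - k, by have := j.isLt; omega⟩ (Fin.lt_def.mpr (show i.1 - k < j.1 - k by omega))
            exact mul_lt_mul_of_pos_left this hsq


/-- A permutation of `{1, …, n}` is a polynomial interchange if and only if it is
separable, i.e. it does not contain the patterns `(2,4,1,3)` or `(3,1,4,2)`. -/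
theorem polynomial_interchange_iff_separable (n : ℕ) (hn : 1 ≤ n)
    (π : Equiv.Perm (Fin n)) :
    (∃ (P : Fin n → Polynomial ℝ) (ε : ℝ), 0 < ε ∧
        (∀ x : ℝ, -ε < x → x < 0 →
          ∀ i j : Fin n, i < j → (P i).eval x < (P j).eval x) ∧
        (∀ x : ℝ, 0 < x → x < ε →
          ∀ i j : Fin n, i < j → (P (π i)).eval x < (P (π j)).eval x)) ↔
      ¬ ∃ i₁ i₂ i₃ i₄ : Fin n, i₁ < i₂ ∧ i₂ < i₃ ∧ i₃ < i₄ ∧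
          ((π i₂ < π i₄ ∧ π i₄ < π i₁ ∧ π i₁ < π i₃) ∨
           (π i₃ < π i₁ ∧ π i₁ < π i₄ ∧ π i₄ < π i₂)) := by
  constructor
  · rintro ⟨P, ε, hε, hl, hr⟩ ⟨i1, i2, i3, i4, h12, h23, h34, hpat⟩
    rcases hpat with ⟨a, b, c⟩ | ⟨a, b, c⟩
    · exact core2413 (P (π i1)) (P (π i2)) (P (π i3)) (P (π i4)) ε hε
        (fun x hx1 hx2 => ⟨hl x hx1 hx2 _ _ a, hl x hx1 hx2 _ _ b, hl x hx1 hx2 _ _ c⟩)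
        (fun x hx1 hx2 => ⟨hr x hx1 hx2 _ _ h12, hr x hx1 hx2 _ _ h23, hr x hx1 hx2 _ _ h34⟩)
    · exact core3142 (P (π i1)) (P (π i2)) (P (π i3)) (P (π i4)) ε hε
        (fun x hx1 hx2 => ⟨hl x hx1 hx2 _ _ a, hl x hx1 hx2 _ _ b, hl x hx1 hx2 _ _ c⟩)
        (fun x hx1 hx2 => ⟨hr x hx1 hx2 _ _ h12, hr x hx1 hx2 _ _ h23, hr x hx1 hx2 _ _ h34⟩)
  · intro hsep
    exact build n π hsep
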